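/- If k is a field of characteristic zero and G a finite group, then every character of a finite-dimensional k-linear representation of G that takes values in the rational numbers ℚ ⊆ k in fact takes values in the integers ℤ ⊆ ℚ. -/

import Mathlib

open Polynomial Matrix

/-- A root of the characteristic polynomial of a matrix `M` with `M ^ n = 1` satisfies
`μ ^ n = 1`. -/
lemma pow_eq_one_of_charpoly_root {K : Type*} [Field K] {d : Type*} [Fintype d] [DecidableEq d]
    {M : Matrix d d K} {n : ℕ} (hM : M ^ n = 1) {μ : K}
    (hμ : M.charpoly.IsRoot μ) : μ ^ n = 1 := by
  have hdet : (Matrix.scalar d μ - M).det = 0 := by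
    have := hμ.eq_zero
    rwa [Matrix.charpoly, _root_.eval_det, Matrix.matPolyEquiv_charmatrix, eval_sub, eval_X,
      eval_C] at this
  obtain ⟨v, hv, hMv⟩ := (Matrix.exists_mulVec_eq_zero_iff).2 hdet
  have hMv' : M *ᵥ v = μ • v := by
    rw [Matrix.sub_mulVec, sub_eq_zero] at hMv
    have hs : (Matrix.scalar d μ) *ᵥ v = μ • v := by
      ext i
      simp [Matrix.scalar, Matrix.mulVec_diagonal]
    rw [← hMv, hs]
  have key : ∀ i : ℕ, (M ^ i) *ᵥ v = (μ ^ i) • v := by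
    intro i
    induction i with
    | zero => simp
    | succ i ih =>
      have h1 : M ^ (i + 1) *ᵥ v = M *ᵥ (M ^ i *ᵥ v) := by
        rw [pow_succ', Matrix.mulVec_mulVec]
      rw [h1, ih, Matrix.mulVec_smul, hMv', smul_smul, ← pow_succ]
  have hvn : v = (μ ^ n) • v := by
    have := key n
    rwa [hM, Matrix.one_mulVec] at this
  obtain ⟨i, hi⟩ := Function.ne_iff.1 hv
  have hvi : v i ≠ 0 := by simpa using hi
  have hviv : v i = (μ ^ n) • v i := congrFun hvn i
  have hμn : (μ ^ n - 1) * v i = 0 := by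
    rw [smul_eq_mul] at hviv
    rw [sub_mul, one_mul, ← hviv]; ring
  rcases mul_eq_zero.1 hμn with h1 | h2
  · exact sub_eq_zero.1 h1
  · exact absurd h2 hvi

/-- The trace of a matrix of finite order over an algebraically closed field is
integral over `ℤ`. -/
lemma isIntegral_trace_of_pow_eq_one {K : Type*} [Field K] [IsAlgClosed K]
    {d : Type*} [Fintype d] [DecidableEq d] {M : Matrix d d K} {n : ℕ} (hn : 0 < n)
    (hM : M ^ n = 1) : IsIntegral ℤ M.trace := by
  rw [Matrix.trace_eq_sum_roots_charpoly]
  have : ∀ μ ∈ M.charpoly.roots, μ ∈ integralClosure ℤ K := by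
    intro μ hμ
    have hroot : M.charpoly.IsRoot μ := Polynomial.isRoot_of_mem_roots hμ
    have hpow : μ ^ n = 1 := pow_eq_one_of_charpoly_root hM hroot
    rw [mem_integralClosure_iff]
    refine ⟨X ^ n - C 1, Polynomial.monic_X_pow_sub_C 1 hn.ne', ?_⟩
    simp [hpow]
  exact (integralClosure ℤ K).multiset_sum_mem this

/-- Over a field `k` of characteristic zero, every character of a finite-dimensional
`k`-linear representation of a finite group that takes rational values in fact takes
integer values. -/
theorem rational_character_is_integer
    (k : Type) [Field k] [CharZero k] (G : Type) [Group G] [Fintype G]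
    (V : FDRep k G) (h : ∀ g : G, ∃ q : ℚ, V.character g = (q : k)) :
    ∀ g : G, ∃ m : ℤ, V.character g = (m : k) := by
  intro g
  obtain ⟨q, hq⟩ := h g
  -- Pass to the algebraic closure
  set K := AlgebraicClosure k
  have hKchar : CharZero K := charZero_of_injective_algebraMap (algebraMap k K).injective
  -- set up the matrix of `ρ g`
  let b := Module.finBasis k V
  let M : Matrix (Fin (Module.finrank k V)) (Fin (Module.finrank k V)) k :=
    LinearMap.toMatrixAlgEquiv b (V.ρ g)
  have hρ : (V.ρ g) ^ Fintype.card G = 1 := by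
    rw [← map_pow, pow_card_eq_one, _root_.map_one]
  have hMpow : M ^ Fintype.card G = 1 := by
    calc M ^ Fintype.card G
        = LinearMap.toMatrixAlgEquiv b ((V.ρ g) ^ Fintype.card G) := (map_pow _ _ _).symm
      _ = 1 := by rw [hρ, _root_.map_one]
  have htraceM : V.character g = M.trace := by
    simp [FDRep.character, LinearMap.trace_eq_matrix_trace k b, M,
      LinearMap.toMatrixAlgEquiv]
  -- the matrix over K
  let M' := M.map (algebraMap k K)
  have hM'pow : M' ^ Fintype.card G = 1 := by
    have h2 : ((algebraMap k K).mapMatrix M) ^ Fintype.card G =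
        (algebraMap k K).mapMatrix (M ^ Fintype.card G) := (map_pow _ _ _).symm
    rw [hMpow, _root_.map_one] at h2
    simpa [M', RingHom.mapMatrix_apply] using h2
  have hint : IsIntegral ℤ M'.trace :=
    isIntegral_trace_of_pow_eq_one Fintype.card_pos hM'pow
  have htrace' : M'.trace = algebraMap k K M.trace := by
    simp [M', Matrix.trace, Matrix.map_apply, map_sum, Matrix.diag]
  have hqK : M'.trace = (q : K) := by
    rw [htrace', ← htraceM, hq, map_ratCast]
  rw [hqK] at hint
  have hcast : (q : K) = algebraMap ℚ K q := (eq_ratCast (algebraMap ℚ K) q).symm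
  rw [hcast] at hint
  have hqint : IsIntegral ℤ q :=
    (isIntegral_algebraMap_iff (algebraMap ℚ K).injective).1 hint
  obtain ⟨m, hm⟩ := IsIntegrallyClosed.isIntegral_iff.1 hqint
  refine ⟨m, ?_⟩
  rw [hq, ← hm, eq_intCast, Rat.cast_intCast]
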